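/- Let q be a prime power and G a finite abelian group with gcd(|G|, q) = 1. Then every Abelian code in F_q[G], i.e. every ideal of the group algebra F_q[G], is μ_{−1}-LCD. -/

import Mathlib

open scoped BigOperators

/-- The map `μ_{-1}` on a group algebra, sending `∑ a_g g` to `∑ a_{g⁻¹} g`. -/
noncomputable def gaMu {F : Type*} [Field F] {G : Type*} [CommGroup G]
    (a : MonoidAlgebra F G) : MonoidAlgebra F G :=
  MonoidAlgebra.ofCoeff (Finsupp.equivMapDomain (Equiv.inv G) a.coeff)

/-- The Euclidean dual of a subset of the group algebra `F[G]`, with respect to the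
inner product `<∑ a_g g, ∑ b_g g> = ∑ g, a_g b_g`. -/
def gaDual {F : Type*} [Field F] {G : Type*} [CommGroup G] [Fintype G]
    (C : Set (MonoidAlgebra F G)) : Set (MonoidAlgebra F G) :=
  {b | ∀ c ∈ C, ∑ g : G, b.coeff g * c.coeff g = 0}

/-- The coefficient at `1` of a product in a group algebra. -/
lemma gaMul_apply_one {F : Type*} [Field F] {G : Type*} [CommGroup G] [Fintype G]
    (b c : MonoidAlgebra F G) : (b * c).coeff 1 = ∑ g : G, b.coeff g * c.coeff g⁻¹ := by
  classical
  rw [MonoidAlgebra.mul_apply_antidiagonal b c 1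
      (Finset.univ.image (fun g : G => (g, g⁻¹)))
      (by
        intro p
        simp only [Finset.mem_image, Finset.mem_univ, true_and]
        constructor
        · rintro ⟨g, rfl⟩; simp
        · intro hp
          exact ⟨p.1, by
            rw [Prod.ext_iff]
            exact ⟨rfl, (eq_inv_of_mul_eq_one_right hp).symm⟩⟩)]
  rw [Finset.sum_image (by
    intro a _ b _ h
    exact (Prod.ext_iff.mp h).1)]

/-- The trace of left multiplication by `y` on the group algebra is `|G| · y(1)`. -/
lemma gaTrace_mulLeft {F : Type*} [Field F] {G : Type*} [CommGroup G] [Fintype G]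
    (y : MonoidAlgebra F G) :
    LinearMap.trace F (MonoidAlgebra F G) (LinearMap.mulLeft F y)
      = (Fintype.card G : F) * y.coeff 1 := by
  classical
  haveI : Module.Finite F (MonoidAlgebra F G) :=
    Module.Finite.equiv ((Finsupp.linearEquivFunOnFinite F F G).symm.trans
      (MonoidAlgebra.coeffLinearEquiv F).symm)
  let b : Module.Basis G F (MonoidAlgebra F G) := MonoidAlgebra.basis G F
  rw [LinearMap.trace_eq_matrix_trace F b]
  rw [Matrix.trace]
  have hdiag : ∀ g : G, (LinearMap.toMatrix b b (LinearMap.mulLeft F y)).diag g = y.coeff 1 := by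
    intro g
    simp only [Matrix.diag, LinearMap.toMatrix_apply, LinearMap.mulLeft_apply]
    have hb : b g = MonoidAlgebra.single g 1 := rfl
    have hrepr : ∀ z : MonoidAlgebra F G, b.repr z g = z.coeff g := fun z => rfl
    rw [hb, hrepr, MonoidAlgebra.mul_single_apply]
    simp
  rw [Finset.sum_congr rfl (fun g _ => hdiag g)]
  simp [Finset.sum_const, nsmul_eq_mul, Finset.card_univ]

/-- If `|G|` is invertible in `F` and `y * y = 0` in the group algebra, then `y(1) = 0`. -/
lemma ga_sq_zero_apply_one {F : Type*} [Field F] {G : Type*} [CommGroup G] [Fintype G]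
    (hcard : (Fintype.card G : F) ≠ 0) (y : MonoidAlgebra F G) (hy : y * y = 0) :
    y.coeff 1 = 0 := by
  haveI : Module.Finite F (MonoidAlgebra F G) :=
    Module.Finite.equiv ((Finsupp.linearEquivFunOnFinite F F G).symm.trans
      (MonoidAlgebra.coeffLinearEquiv F).symm)
  have hnil : IsNilpotent (LinearMap.mulLeft F y) :=
    ⟨2, by rw [LinearMap.pow_mulLeft, pow_two, hy, LinearMap.mulLeft_zero_eq_zero]⟩
  have := LinearMap.isNilpotent_trace_of_isNilpotent hnil
  rw [gaTrace_mulLeft] at this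
  rcases this with ⟨n, hn⟩
  have h0 : (Fintype.card G : F) * y.coeff 1 = 0 := by
    by_contra h
    exact (pow_ne_zero n h) hn
  rcases mul_eq_zero.mp h0 with h | h
  · exact absurd h hcard
  · exact h

/-- Let `q` be a prime power and `G` a finite abelian group with `gcd(|G|, q) = 1`.
Then every Abelian code in `F_q[G]` (every ideal of the group algebra) is
`μ_{-1}`-LCD. -/
theorem abelian_code_semisimple_mu_neg_one_lcd
    {F : Type*} [Field F] [Fintype F] {G : Type*} [CommGroup G] [Fintype G]
    (hcop : Nat.Coprime (Fintype.card G) (Fintype.card F))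
    (C : Ideal (MonoidAlgebra F G)) :
    (C : Set (MonoidAlgebra F G)) ∩ gaDual (gaMu '' (C : Set (MonoidAlgebra F G))) = {0} := by
  classical
  -- `|G|` is invertible in `F`
  have hcard : (Fintype.card G : F) ≠ 0 := by
    intro h0
    have hp : (ringChar F) ∣ Fintype.card G := (CharP.cast_eq_zero_iff F _ _).mp h0
    obtain ⟨n, hn, hFcard⟩ := FiniteField.card F (ringChar F)
    have hpF : (ringChar F) ∣ Fintype.card F := by
      rw [hFcard]; exact dvd_pow_self _ (by exact_mod_cast n.ne_zero)
    have hd1 : (ringChar F) ∣ 1 := hcop ▸ Nat.dvd_gcd hp hpF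
    exact hn.ne_one (Nat.dvd_one.mp hd1)
  ext x
  simp only [Set.mem_inter_iff, Set.mem_singleton_iff, SetLike.mem_coe]
  constructor
  · rintro ⟨hxC, hxD⟩
    -- key: for all c ∈ C, (x * c) 1 = 0
    have key : ∀ c ∈ C, (x * c).coeff 1 = 0 := by
      intro c hc
      have := hxD (gaMu c) ⟨c, hc, rfl⟩
      rw [gaMul_apply_one]
      simpa [gaMu, Finsupp.equivMapDomain_apply, Equiv.inv] using this
    -- consequently `x * x = 0`
    have hxx : x * x = 0 := by
      ext h
      have hmem : (MonoidAlgebra.single h⁻¹ (1 : F)) * x ∈ C := C.mul_mem_left _ hxC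
      have hk := key _ hmem
      have heq : x * (MonoidAlgebra.single h⁻¹ (1 : F) * x) =
          (x * x) * MonoidAlgebra.single h⁻¹ (1 : F) := by ring
      rw [heq, MonoidAlgebra.mul_single_apply] at hk
      simpa using hk
    -- for each `g`, `(g⁻¹ · x)² = 0`, so `x g = (g⁻¹ · x)(1) = 0`
    ext g
    have hy : (MonoidAlgebra.single g⁻¹ (1 : F) * x) * (MonoidAlgebra.single g⁻¹ (1 : F) * x)
        = 0 := by
      have : (MonoidAlgebra.single g⁻¹ (1 : F) * x) * (MonoidAlgebra.single g⁻¹ (1 : F) * x)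
          = (MonoidAlgebra.single g⁻¹ (1 : F) * MonoidAlgebra.single g⁻¹ (1 : F)) * (x * x) := by
        ring
      rw [this, hxx, mul_zero]
    have h1 := ga_sq_zero_apply_one hcard _ hy
    rw [MonoidAlgebra.single_mul_apply] at h1
    simpa using h1
  · rintro rfl
    refine ⟨C.zero_mem, ?_⟩
    intro c _
    simp
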